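/- Let m, l ≥ 1 be integers and L₁ > 0. Let σ : [0,∞) × ℝ^m → ℝ^{m×l} (real m×l matrices, with the Frobenius norm ‖·‖) be such that s ↦ σ(s,x) is Borel measurable for each x, and for all s ≥ 0 and x₁, x₂ ∈ ℝ^m one has ‖σ(s,x₁) − σ(s,x₂)‖ ≤ L₁|x₁ − x₂| and ‖σ(s,0)‖ ≤ L₁. Suppose there exist σ̄ : ℝ^m → ℝ^{m×l} and κ₂ : (0,∞) → (0,∞) with κ₂(T) → 0 as T → ∞ such that for every T > 0 and every x ∈ ℝ^m, (1/T)∫₀^T ‖σ(s,x) − σ̄(x)‖² ds ≤ κ₂(T)(1 + |x|²). Then for all x₁, x₂ ∈ ℝ^m, ‖σ̄(x₁) − σ̄(x₂)‖² ≤ 3 L₁² |x₁ − x₂|²; in particular σ̄ is Lipschitz continuous with constant √3·L₁. -/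

import Mathlib

open MeasureTheory Filter

/-- A measurable function bounded on `Ioc 0 T` has interval-integrable squared norm. -/
lemma sq_norm_intervalIntegrable {E : Type*} [NormedAddCommGroup E]
    [MeasurableSpace E] [BorelSpace E]
    {f : ℝ → E} (hf : Measurable f) {T C : ℝ} (hT : 0 ≤ T)
    (hC : ∀ s ∈ Set.Ioc (0:ℝ) T, ‖f s‖ ≤ C) :
    IntervalIntegrable (fun s => ‖f s‖ ^ 2) volume 0 T := by
  rw [intervalIntegrable_iff_integrableOn_Ioc_of_le hT]
  have hmeas : Measurable fun s => ‖f s‖ ^ 2 := (hf.norm.pow_const 2)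
  refine Integrable.mono' (g := fun _ => C ^ 2) (integrableOn_const ?_)
    hmeas.aestronglyMeasurable ?_
  · exact measure_Ioc_lt_top.ne
  · filter_upwards [ae_restrict_mem measurableSet_Ioc] with s hs
    have h1 := hC s hs
    have h2 : (0:ℝ) ≤ ‖f s‖ := norm_nonneg _
    rw [Real.norm_eq_abs, abs_of_nonneg (by positivity)]
    nlinarith

theorem averaged_diffusion_lipschitz
    (m l : ℕ) (hm : 1 ≤ m) (hl : 1 ≤ l) (L₁ : ℝ) (hL₁ : 0 < L₁)
    (σ : ℝ → EuclideanSpace ℝ (Fin m) → EuclideanSpace ℝ (Fin m × Fin l))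
    (hmeas : ∀ x, Measurable fun s => σ s x)
    (hLip : ∀ s, 0 ≤ s → ∀ x₁ x₂, ‖σ s x₁ - σ s x₂‖ ≤ L₁ * ‖x₁ - x₂‖)
    (hσ0 : ∀ s, 0 ≤ s → ‖σ s 0‖ ≤ L₁)
    (σbar : EuclideanSpace ℝ (Fin m) → EuclideanSpace ℝ (Fin m × Fin l))
    (κ₂ : ℝ → ℝ) (hκpos : ∀ T, 0 < T → 0 < κ₂ T)
    (hκlim : Tendsto κ₂ atTop (nhds 0))
    (havg : ∀ T, 0 < T → ∀ x,
      (1 / T) * (∫ s in (0:ℝ)..T, ‖σ s x - σbar x‖ ^ 2) ≤ κ₂ T * (1 + ‖x‖ ^ 2)) :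
    (∀ x₁ x₂, ‖σbar x₁ - σbar x₂‖ ^ 2 ≤ 3 * L₁ ^ 2 * ‖x₁ - x₂‖ ^ 2) ∧
      LipschitzWith (Real.toNNReal (Real.sqrt 3 * L₁)) σbar := by
  -- norm bound for σ
  have hσbd : ∀ s, 0 ≤ s → ∀ x, ‖σ s x‖ ≤ L₁ * (1 + ‖x‖) := by
    intro s hs x
    have h1 := hLip s hs x 0
    have h2 := hσ0 s hs
    have h3 : ‖σ s x‖ ≤ ‖σ s x - σ s 0‖ + ‖σ s 0‖ := by
      calc ‖σ s x‖ = ‖(σ s x - σ s 0) + σ s 0‖ := by rw [sub_add_cancel]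
        _ ≤ _ := norm_add_le _ _
    simp only [sub_zero] at h1
    nlinarith
  have main : ∀ x₁ x₂, ‖σbar x₁ - σbar x₂‖ ^ 2 ≤ 3 * L₁ ^ 2 * ‖x₁ - x₂‖ ^ 2 := by
    intro x₁ x₂
    set C := ‖σbar x₁ - σbar x₂‖ ^ 2 with hCdef
    set D := ‖x₁ - x₂‖ ^ 2 with hDdef
    have key : ∀ T, 0 < T →
        C ≤ 3 * (κ₂ T * (2 + ‖x₁‖ ^ 2 + ‖x₂‖ ^ 2) + L₁ ^ 2 * D) := by
      intro T hT
      -- integrability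
      have hInt : ∀ x, IntervalIntegrable (fun s => ‖σ s x - σbar x‖ ^ 2) volume 0 T := by
        intro x
        refine sq_norm_intervalIntegrable ((hmeas x).sub measurable_const) hT.le
          (C := L₁ * (1 + ‖x‖) + ‖σbar x‖) ?_
        intro s hs
        calc ‖σ s x - σbar x‖ ≤ ‖σ s x‖ + ‖σbar x‖ := norm_sub_le _ _
          _ ≤ L₁ * (1 + ‖x‖) + ‖σbar x‖ := by
              have := hσbd s hs.1.le x; linarith
      have hIntg : IntervalIntegrable (fun s => ‖σ s x₁ - σ s x₂‖ ^ 2) volume 0 T := by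
        refine sq_norm_intervalIntegrable ((hmeas x₁).sub (hmeas x₂)) hT.le
          (C := L₁ * ‖x₁ - x₂‖) ?_
        intro s hs; exact hLip s hs.1.le x₁ x₂
      have hIntSum : IntervalIntegrable (fun s => 3 * (‖σ s x₁ - σbar x₁‖ ^ 2 +
          ‖σ s x₁ - σ s x₂‖ ^ 2 + ‖σ s x₂ - σbar x₂‖ ^ 2)) volume 0 T :=
        (((hInt x₁).add hIntg).add (hInt x₂)).const_mul 3
      -- pointwise bound
      have hpt : ∀ s ∈ Set.Icc (0:ℝ) T, C ≤ 3 * (‖σ s x₁ - σbar x₁‖ ^ 2 +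
          ‖σ s x₁ - σ s x₂‖ ^ 2 + ‖σ s x₂ - σbar x₂‖ ^ 2) := by
        intro s _
        have h1 : ‖σbar x₁ - σbar x₂‖ ≤ ‖σ s x₁ - σbar x₁‖ + ‖σ s x₁ - σ s x₂‖ +
            ‖σ s x₂ - σbar x₂‖ := by
          have : σbar x₁ - σbar x₂ = -(σ s x₁ - σbar x₁) + (σ s x₁ - σ s x₂) +
              (σ s x₂ - σbar x₂) := by abel
          rw [this]
          calc ‖-(σ s x₁ - σbar x₁) + (σ s x₁ - σ s x₂) + (σ s x₂ - σbar x₂)‖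
              ≤ ‖-(σ s x₁ - σbar x₁)‖ + ‖σ s x₁ - σ s x₂‖ + ‖σ s x₂ - σbar x₂‖ :=
                norm_add₃_le
            _ = _ := by rw [norm_neg]
        have h2 : (0:ℝ) ≤ ‖σbar x₁ - σbar x₂‖ := norm_nonneg _
        have h3 : (0:ℝ) ≤ ‖σ s x₁ - σbar x₁‖ := norm_nonneg _
        have h4 : (0:ℝ) ≤ ‖σ s x₁ - σ s x₂‖ := norm_nonneg _
        have h5 : (0:ℝ) ≤ ‖σ s x₂ - σbar x₂‖ := norm_nonneg _
        simp only [hCdef]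
        nlinarith [sq_nonneg (‖σ s x₁ - σbar x₁‖ - ‖σ s x₁ - σ s x₂‖),
          sq_nonneg (‖σ s x₁ - σbar x₁‖ - ‖σ s x₂ - σbar x₂‖),
          sq_nonneg (‖σ s x₁ - σ s x₂‖ - ‖σ s x₂ - σbar x₂‖)]
      -- integrate the pointwise bound
      have hCT : C * T ≤ ∫ s in (0:ℝ)..T, 3 * (‖σ s x₁ - σbar x₁‖ ^ 2 +
          ‖σ s x₁ - σ s x₂‖ ^ 2 + ‖σ s x₂ - σbar x₂‖ ^ 2) := by
        have := intervalIntegral.integral_mono_on hT.le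
          (intervalIntegrable_const (c := C)) hIntSum hpt
        rwa [intervalIntegral.integral_const, sub_zero, smul_eq_mul, mul_comm] at this
      -- split the integral
      have hsplit : (∫ s in (0:ℝ)..T, 3 * (‖σ s x₁ - σbar x₁‖ ^ 2 +
          ‖σ s x₁ - σ s x₂‖ ^ 2 + ‖σ s x₂ - σbar x₂‖ ^ 2)) =
          3 * ((∫ s in (0:ℝ)..T, ‖σ s x₁ - σbar x₁‖ ^ 2) +
            (∫ s in (0:ℝ)..T, ‖σ s x₁ - σ s x₂‖ ^ 2) +
            (∫ s in (0:ℝ)..T, ‖σ s x₂ - σbar x₂‖ ^ 2)) := by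
        rw [intervalIntegral.integral_const_mul,
          intervalIntegral.integral_add ((hInt x₁).add hIntg) (hInt x₂),
          intervalIntegral.integral_add (hInt x₁) hIntg]
      -- bound the middle integral
      have hg : (∫ s in (0:ℝ)..T, ‖σ s x₁ - σ s x₂‖ ^ 2) ≤ L₁ ^ 2 * D * T := by
        have := intervalIntegral.integral_mono_on hT.le hIntg
          (intervalIntegrable_const (c := L₁ ^ 2 * D)) ?_
        · rwa [intervalIntegral.integral_const, sub_zero, smul_eq_mul, mul_comm] at this
        · intro s hs
          have h1 := hLip s hs.1 x₁ x₂
          have h2 : (0:ℝ) ≤ ‖σ s x₁ - σ s x₂‖ := norm_nonneg _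
          simp only [hDdef]
          nlinarith
      -- bounds from havg
      have h1 := havg T hT x₁
      have h2 := havg T hT x₂
      have hT' : (0:ℝ) < 1 / T := by positivity
      have ha1 : (∫ s in (0:ℝ)..T, ‖σ s x₁ - σbar x₁‖ ^ 2) ≤ T * (κ₂ T * (1 + ‖x₁‖ ^ 2)) := by
        have h := mul_le_mul_of_nonneg_left h1 hT.le
        calc (∫ s in (0:ℝ)..T, ‖σ s x₁ - σbar x₁‖ ^ 2)
            = T * ((1 / T) * (∫ s in (0:ℝ)..T, ‖σ s x₁ - σbar x₁‖ ^ 2)) := by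
              field_simp
          _ ≤ _ := h
      have ha2 : (∫ s in (0:ℝ)..T, ‖σ s x₂ - σbar x₂‖ ^ 2) ≤ T * (κ₂ T * (1 + ‖x₂‖ ^ 2)) := by
        have h := mul_le_mul_of_nonneg_left h2 hT.le
        calc (∫ s in (0:ℝ)..T, ‖σ s x₂ - σbar x₂‖ ^ 2)
            = T * ((1 / T) * (∫ s in (0:ℝ)..T, ‖σ s x₂ - σbar x₂‖ ^ 2)) := by
              field_simp
          _ ≤ _ := h
      have hfinal : C * T ≤ 3 * (κ₂ T * (2 + ‖x₁‖ ^ 2 + ‖x₂‖ ^ 2) + L₁ ^ 2 * D) * T := by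
        rw [hsplit] at hCT
        nlinarith
      exact le_of_mul_le_mul_right (by linarith) hT
    -- take T → ∞
    have hlim : Tendsto (fun T => 3 * (κ₂ T * (2 + ‖x₁‖ ^ 2 + ‖x₂‖ ^ 2) + L₁ ^ 2 * D))
        atTop (nhds (3 * (0 * (2 + ‖x₁‖ ^ 2 + ‖x₂‖ ^ 2) + L₁ ^ 2 * D))) :=
      (((hκlim.mul_const _).add_const _).const_mul 3)
    have := ge_of_tendsto hlim (eventually_atTop.2 ⟨1, fun T hT => key T (by linarith)⟩)
    calc C ≤ 3 * (0 * (2 + ‖x₁‖ ^ 2 + ‖x₂‖ ^ 2) + L₁ ^ 2 * D) := this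
      _ = 3 * L₁ ^ 2 * D := by ring
  refine ⟨main, ?_⟩
  refine LipschitzWith.of_dist_le_mul fun x₁ x₂ => ?_
  have h1 := main x₁ x₂
  have h2 : (0:ℝ) ≤ Real.sqrt 3 * L₁ := by positivity
  rw [dist_eq_norm, dist_eq_norm, Real.coe_toNNReal _ h2]
  have h3 : (Real.sqrt 3) ^ 2 = 3 := Real.sq_sqrt (by norm_num)
  nlinarith [norm_nonneg (σbar x₁ - σbar x₂), norm_nonneg (x₁ - x₂),
    mul_nonneg h2 (norm_nonneg (x₁ - x₂))]
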